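/- Let F_q have q = p^s elements with p prime. The polynomial x^p - x - 1 is irreducible over F_q if and only if p does not divide s. -/

import Mathlib

open Polynomial IntermediateField

theorem stmt12 {F : Type*} [Field F] [Fintype F] (p s : ℕ) [Fact p.Prime]
    (hcard : Fintype.card F = p ^ s) :
    Irreducible (X ^ p - X - 1 : Polynomial F) ↔ ¬ p ∣ s := by
  classical
  have hp := Fact.out (p := p.Prime)
  have h1p : 1 ≤ p := hp.one_lt.le
  have h2p : ¬ p ≤ 1 := Nat.not_le.mpr hp.one_lt
  have h3p : ¬ (1 : ℕ) = p := hp.one_lt.ne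
  have h4p : ¬ p = 0 := hp.ne_zero
  have hs0 : s ≠ 0 := by
    rintro rfl
    have := Fintype.one_lt_card (α := F)
    simp [hcard] at this
  have hchar : CharP F p := by
    obtain ⟨n, hr, hcard'⟩ := FiniteField.card F (ringChar F)
    have : p = ringChar F := by
      have h1 : p ∣ (ringChar F) ^ (n : ℕ) := by
        rw [← hcard', hcard]; exact dvd_pow_self p hs0
      exact (Nat.prime_dvd_prime_iff_eq hp hr).mp (hp.dvd_of_dvd_pow h1)
    rw [this]; exact ringChar.charP F
  have hmon : (X ^ p - X - 1 : Polynomial F).Monic := by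
    monicity! <;> norm_num [h1p, h2p, h3p, h4p]
  have hdeg : (X ^ p - X - 1 : Polynomial F).natDegree = p := by
    compute_degree! <;> norm_num [h1p, h2p, h3p, h4p]
  set f : Polynomial F := X ^ p - X - 1 with hf
  have hf0 : f ≠ 0 := hmon.ne_zero
  -- a root in the algebraic closure
  set E := AlgebraicClosure F
  have hcharE : CharP E p := charP_of_injective_algebraMap (algebraMap F E).injective p
  have hdegE : (f.map (algebraMap F E)).natDegree = p := by
    rw [hmon.natDegree_map, hdeg]
  obtain ⟨α, hα⟩ : ∃ α : E, (f.map (algebraMap F E)).IsRoot α := by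
    apply IsAlgClosed.exists_root
    rw [Polynomial.degree_eq_natDegree (hmon.map _).ne_zero, hdegE]
    exact_mod_cast h4p
  have haev : aeval α f = 0 := by rw [aeval_def, ← eval_map]; exact hα
  have h1 : α ^ p = α + 1 := by
    have h := haev
    simp only [hf, map_sub, map_pow, map_one, map_add, aeval_X, sub_sub, sub_eq_zero] at h
    exact h
  have key : ∀ k : ℕ, α ^ p ^ k = α + k := by
    intro k
    induction k with
    | zero => simp
    | succ k ih =>
      rw [pow_succ, pow_mul, ih, add_pow_char, h1]
      have : ((k : E)) ^ p = (k : E) := map_natCast (frobenius E p) k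
      rw [this]
      push_cast
      ring
  have hint : IsIntegral F α := Algebra.IsIntegral.isIntegral α
  have hdvdmin : minpoly F α ∣ f := minpoly.dvd F α haev
  set d := (minpoly F α).natDegree with hd
  have hdle : d ≤ p := hdeg ▸ natDegree_le_of_dvd hdvdmin hf0
  have hdpos : 0 < d := minpoly.natDegree_pos hint
  -- α ^ (p ^ (s*d)) = α
  have hKfd : FiniteDimensional F F⟮α⟯ := IntermediateField.adjoin.finiteDimensional hint
  have hKfin : Finite F⟮α⟯ := Module.finite_of_finite F
  have hKfty : Fintype F⟮α⟯ := Fintype.ofFinite _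
  have hKcard : Fintype.card F⟮α⟯ = p ^ (s * d) := by
    rw [Module.card_eq_pow_finrank (K := F), IntermediateField.adjoin.finrank hint,
      hcard, ← pow_mul]
  have hfix : α ^ p ^ (s * d) = α := by
    have h := FiniteField.pow_card (IntermediateField.AdjoinSimple.gen F α)
    rw [hKcard] at h
    have := congrArg (algebraMap F⟮α⟯ E) h
    simpa using this
  have hdvd_sd : p ∣ s * d := by
    have := key (s * d)
    rw [hfix, left_eq_add] at this
    exact (CharP.cast_eq_zero_iff E p _).mp this
  constructor
  · -- irreducible → ¬ p ∣ s
    intro hirr hps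
    -- f = minpoly, and α^q = α so minpoly ∣ X^q - X which splits over F
    have hfeq : f = minpoly F α := minpoly.eq_of_irreducible_of_monic hirr haev hmon
    have hgd : f ∣ (X ^ Fintype.card F - X : Polynomial F) := by
      rw [hfeq]
      apply minpoly.dvd
      have hroot : α ^ Fintype.card F = α := by
        rw [hcard, key s]
        simpa using (CharP.cast_eq_zero_iff E p s).mpr hps
      simp [hroot]
    have hg0 : (X ^ Fintype.card F - X : Polynomial F) ≠ 0 :=
      FiniteField.X_pow_card_sub_X_ne_zero F Fintype.one_lt_card
    have hgsplits : Splits (X ^ Fintype.card F - X : Polynomial F) := by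
      rw [splits_iff_card_roots, FiniteField.roots_X_pow_card_sub_X,
        FiniteField.X_pow_card_sub_X_natDegree_eq F Fintype.one_lt_card]
      simp
    have hfsplits : Splits f :=
      hgsplits.of_dvd hg0 hgd
    have := hfsplits.degree_eq_one_of_irreducible hirr
    rw [Polynomial.degree_eq_natDegree hf0, hdeg] at this
    exact_mod_cast h3p (by exact_mod_cast this.symm)
  · -- ¬ p ∣ s → irreducible
    intro hns
    have hpd : p ∣ d := (hp.dvd_mul.mp hdvd_sd).resolve_left hns
    have hdp : d = p := Nat.le_antisymm hdle (Nat.le_of_dvd hdpos hpd)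
    have hfeq : f = minpoly F α := by
      obtain ⟨c, hc⟩ := hdvdmin
      have hc0 : c ≠ 0 := by rintro rfl; simp [hc] at hf0
      have hcd : c.natDegree = 0 := by
        have := hdeg
        rw [hc, natDegree_mul (minpoly.ne_zero hint) hc0, ← hd, hdp] at this
        omega
      have hcC : c = C (c.coeff 0) := eq_C_of_natDegree_eq_zero hcd
      have hlead : c.coeff 0 = 1 := by
        have := hmon
        rw [Monic, hc, leadingCoeff_mul, (minpoly.monic hint).leadingCoeff, one_mul,
          hcC, leadingCoeff_C] at this
        exact this
      rw [hc, hcC, hlead, map_one, mul_one]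
    rw [hfeq]
    exact minpoly.irreducible hint
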